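/- Let I_i = [a_i, b_i), i = k, …, n, be half-open intervals with a_k < a_{k+1} < … < a_n, b_k < b_{k+1} < … < b_n, a_i < b_i for all i, and a_{i+1} < b_i for k ≤ i < n (consecutive intervals overlap). Let f : ℝ → ℝ be continuous and convex. Call I_i an E-interval of an ordering α if a_i lies in the exposed part of I_i relative to the intervals preceding I_i in α. Then among all orderings of I_k, …, I_n in which I_k is the only E-interval, the identity ordering (k, k+1, …, n) has minimum cost, and its cost equals f(b_k − a_k) + ∑_{i=k+1}^n f(b_i − b_{i−1}). -/

import Mathlib

open MeasureTheory Finset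

theorem twoPiece (f : ℝ → ℝ) (hf : ConvexOn ℝ Set.univ f) {x y : ℝ} (hx : 0 ≤ x) (hy : 0 ≤ y) :
    f x + f y ≤ f (x + y) + f 0 := by
  rcases eq_or_lt_of_le (add_nonneg hx hy) with h | h
  · have hx0 : x = 0 := by linarith
    have hy0 : y = 0 := by linarith
    simp [hx0, hy0]
  · set s := x + y with hs
    have h1 : f x ≤ (x/s) * f s + (y/s) * f 0 := by
      have h0 := hf.2 (Set.mem_univ s) (Set.mem_univ (0:ℝ)) (by positivity : (0:ℝ) ≤ x/s)
        (by positivity : (0:ℝ) ≤ y/s) (by field_simp; linarith)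
      simp only [smul_eq_mul, mul_zero, add_zero] at h0
      rwa [show x/s*s = x by field_simp] at h0
    have h2 : f y ≤ (y/s) * f s + (x/s) * f 0 := by
      have h0 := hf.2 (Set.mem_univ s) (Set.mem_univ (0:ℝ)) (by positivity : (0:ℝ) ≤ y/s)
        (by positivity : (0:ℝ) ≤ x/s) (by field_simp; linarith)
      simp only [smul_eq_mul, mul_zero, add_zero] at h0
      rwa [show y/s*s = y by field_simp] at h0
    have hsum : x/s + y/s = 1 := by field_simp; linarith
    have e1 : x/s * f s + y/s * f s = f s := by rw [← add_mul, hsum, one_mul]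
    have e2 : x/s * f 0 + y/s * f 0 = f 0 := by rw [← add_mul, hsum, one_mul]
    linarith

theorem monoStep (b : ℕ → ℝ) (m : ℕ) (h : ∀ i, i + 1 < m → b i < b (i + 1)) :
    ∀ i j, i ≤ j → j < m → b i ≤ b j := by
  intro i j hij
  induction hij with
  | refl => intro _; exact le_refl _
  | @step k hk ih =>
      intro hj
      have h1 : b i ≤ b k := ih (by omega)
      have h2 : b k < b (k + 1) := h k hj
      linarith


theorem strictMonoStep (b : ℕ → ℝ) (m : ℕ) (h : ∀ i, i + 1 < m → b i < b (i + 1)) :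
    ∀ i j, i < j → j < m → b i < b j := by
  intro i j hij hj
  have h1 : b i ≤ b (j - 1) := monoStep b m h i (j-1) (by omega) (by omega)
  have h2 : b (j - 1) < b (j - 1 + 1) := h _ (by omega)
  rw [show j - 1 + 1 = j by omega] at h2
  linarith

theorem splitLemma (f : ℝ → ℝ) (hf : ConvexOn ℝ Set.univ f) (b : ℕ → ℝ) (m : ℕ)
    (h : ∀ i, i + 1 < m → b i < b (i + 1)) :
    ∀ q, q < m → ∀ p, p < q →
      ∑ i ∈ Ico (p+1) (q+1), f (b i - b (i-1)) ≤ f (b q - b p) + ((q - p - 1 : ℕ) : ℝ) * f 0 := by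
  intro q
  induction q with
  | zero => intro _ p hp; omega
  | succ n ih =>
    intro hq p hp
    rcases Nat.lt_or_ge p n with hpn | hpn
    · have hsum : ∑ i ∈ Ico (p+1) (n+1+1), f (b i - b (i-1))
          = (∑ i ∈ Ico (p+1) (n+1), f (b i - b (i-1))) + f (b (n+1) - b (n+1-1)) :=
        Finset.sum_Ico_succ_top (by omega) _
      rw [hsum, show n+1-1 = n by omega]
      have h1 := ih (by omega) p hpn
      have h2 : f (b n - b p) + f (b (n+1) - b n) ≤ f (b (n+1) - b p) + f 0 := by
        have hx : (0:ℝ) ≤ b n - b p := by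
          have := strictMonoStep b m h p n hpn (by omega); linarith
        have hy : (0:ℝ) ≤ b (n+1) - b n := by
          have := h n hq; linarith
        have := twoPiece f hf hx hy
        rwa [show (b n - b p) + (b (n+1) - b n) = b (n+1) - b p by ring] at this
      have hc : ((n + 1 - p - 1 : ℕ) : ℝ) = ((n - p - 1 : ℕ) : ℝ) + 1 := by
        rw [show n + 1 - p - 1 = (n - p - 1) + 1 by omega]; push_cast; ring
      rw [hc]; linarith
    · have hpe : p = n := by omega
      subst hpe
      rw [show Ico (p+1) (p+1+1) = {p+1} from by rw [Nat.Ico_succ_singleton]]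
      simp [show p + 1 - 1 = p by omega, show p+1-p-1 = 0 by omega]

theorem mainInd (f : ℝ → ℝ) (hf : ConvexOn ℝ Set.univ f) (b : ℕ → ℝ) (m : ℕ)
    (h : ∀ i, i + 1 < m → b i < b (i + 1)) (D : ℕ → ℝ) (hD0 : D 0 = b 0)
    (hDc : ∀ k, k < m → ∃ c, k ≤ c ∧ c < m ∧ D k = b c)
    (hDmono : ∀ k, k + 1 < m → D k ≤ D (k+1)) :
    ∀ k, k < m → ∀ c, k ≤ c → c < m → D k = b c →
      ∑ i ∈ Ico 1 (c+1), f (b i - b (i-1))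
        ≤ (∑ i ∈ Ico 1 (k+1), f (D i - D (i-1))) + ((c - k : ℕ) : ℝ) * f 0 := by
  intro k
  induction k with
  | zero =>
    intro _ c hc0 hcm hDcEq
    have hcc : c = 0 := by
      by_contra hne
      have hlt : b 0 < b c := strictMonoStep b m h 0 c (by omega) hcm
      rw [← hDcEq, hD0] at hlt
      exact lt_irrefl _ hlt
    subst hcc
    simp
  | succ k ih =>
    intro hk1 c' hc' hc'm hDEq
    obtain ⟨c, hkc, hcm, hDk⟩ := hDc k (by omega)
    have hbcc : b c ≤ b c' := by
      have := hDmono k hk1; rw [hDk, hDEq] at this; exact this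
    have hcle : c ≤ c' := by
      by_contra hgt
      have : b c' < b c := strictMonoStep b m h c' c (by omega) hcm
      linarith
    have hRHS : ∑ i ∈ Ico 1 (k+1+1), f (D i - D (i-1))
        = (∑ i ∈ Ico 1 (k+1), f (D i - D (i-1))) + f (D (k+1) - D (k+1-1)) :=
      Finset.sum_Ico_succ_top (by omega) _
    rw [hRHS, show k+1-1 = k by omega]
    rcases eq_or_lt_of_le hcle with heq | hlt
    · subst heq
      have hz : D (k+1) - D k = 0 := by rw [hDk, hDEq]; ring
      rw [hz]
      have hc1 : c ≥ k + 1 := hc'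
      have := ih (by omega) c hkc hcm hDk
      have hcast : ((c - k : ℕ) : ℝ) = ((c - (k+1) : ℕ) : ℝ) + 1 := by
        rw [show c - k = (c - (k+1)) + 1 by omega]; push_cast; ring
      rw [hcast] at this
      linarith
    · have hsplit : ∑ i ∈ Ico 1 (c'+1), f (b i - b (i-1))
          = (∑ i ∈ Ico 1 (c+1), f (b i - b (i-1))) + ∑ i ∈ Ico (c+1) (c'+1), f (b i - b (i-1)) :=
        (Finset.sum_Ico_consecutive _ (by omega) (by omega)).symm
      have h1 := ih (by omega) c hkc hcm hDk
      have h2 := splitLemma f hf b m h c' hc'm c hlt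
      have hDdiff : D (k+1) - D k = b c' - b c := by rw [hDk, hDEq]
      rw [hsplit, hDdiff]
      have hcast : ((c' - (k+1) : ℕ) : ℝ) = ((c - k : ℕ) : ℝ) + ((c' - c - 1 : ℕ) : ℝ) := by
        rw [show c' - (k+1) = (c - k) + (c' - c - 1) by omega]; push_cast; ring
      rw [hcast]
      linarith

def bIdx (m : ℕ) (α : Equiv.Perm (Fin m)) (j : ℕ) : ℕ :=
  if h : j < m then (α ⟨j, h⟩ : ℕ) else j

noncomputable def Dmax (m : ℕ) (α : Equiv.Perm (Fin m)) (b : ℕ → ℝ) (k : ℕ) : ℝ :=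
  (Finset.range (k+1)).sup' (Finset.nonempty_range_iff.2 (Nat.succ_ne_zero k))
    (fun j => b (bIdx m α j))

theorem bIdx_lt (m : ℕ) (α : Equiv.Perm (Fin m)) {j : ℕ} (h : j < m) : bIdx m α j < m := by
  rw [bIdx, dif_pos h]; exact (α ⟨j, h⟩).2

theorem Dmax_succ (m : ℕ) (α : Equiv.Perm (Fin m)) (b : ℕ → ℝ) (k : ℕ) :
    Dmax m α b (k+1) = b (bIdx m α (k+1)) ⊔ Dmax m α b k := by
  apply le_antisymm
  · rw [Dmax]
    apply Finset.sup'_le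
    intro j hj
    rcases Nat.lt_succ_iff_lt_or_eq.1 (Finset.mem_range.1 hj) with h | h
    · exact le_trans (Finset.le_sup' (fun j => b (bIdx m α j)) (Finset.mem_range.2 h))
        (le_max_right _ _)
    · rw [h]; exact le_max_left _ _
  · apply max_le
    · rw [Dmax]
      exact Finset.le_sup' (fun j => b (bIdx m α j)) (Finset.mem_range.2 (by omega))
    · rw [Dmax, Dmax]
      apply Finset.sup'_le
      intro j hj
      exact Finset.le_sup' (fun j => b (bIdx m α j))
        (Finset.mem_range.2 (by have := Finset.mem_range.1 hj; omega))

theorem Dmax_zero (m : ℕ) (α : Equiv.Perm (Fin m)) (b : ℕ → ℝ) :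
    Dmax m α b 0 = b (bIdx m α 0) := by
  rw [Dmax]; simp

theorem Dmax_mono (m : ℕ) (α : Equiv.Perm (Fin m)) (b : ℕ → ℝ) (k : ℕ) :
    Dmax m α b k ≤ Dmax m α b (k+1) := by
  rw [Dmax_succ]; exact le_max_right _ _

-- pigeonhole: some j ≤ k has bIdx j ≥ k
theorem exists_bIdx_ge (m : ℕ) (α : Equiv.Perm (Fin m)) {k : ℕ} (hk : k < m) :
    ∃ j ∈ Finset.range (k+1), k ≤ bIdx m α j := by
  by_contra hcon
  push_neg at hcon
  have hmaps : ∀ j ∈ Finset.range (k+1), bIdx m α j ∈ Finset.range k := by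
    intro j hj; exact Finset.mem_range.2 (hcon j hj)
  have hcard : (Finset.range k).card < (Finset.range (k+1)).card := by simp
  obtain ⟨x, hx, y, hy, hxy, heq⟩ := Finset.exists_ne_map_eq_of_card_lt_of_maps_to hcard hmaps
  have hxm : x < m := lt_of_lt_of_le (Finset.mem_range.1 hx) hk
  have hym : y < m := lt_of_lt_of_le (Finset.mem_range.1 hy) hk
  rw [bIdx, dif_pos hxm, bIdx, dif_pos hym] at heq
  have : (⟨x, hxm⟩ : Fin m) = ⟨y, hym⟩ := α.injective (Fin.val_injective heq)
  exact hxy (by simpa using congrArg Fin.val this)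

theorem le_Dmax (m : ℕ) (α : Equiv.Perm (Fin m)) (b : ℕ → ℝ)
    (hmono : ∀ i j, i ≤ j → j < m → b i ≤ b j) {k : ℕ} (hk : k < m) :
    b k ≤ Dmax m α b k := by
  obtain ⟨j, hj, hge⟩ := exists_bIdx_ge m α hk
  have hjm : j < m := lt_of_lt_of_le (Finset.mem_range.1 hj) hk
  calc b k ≤ b (bIdx m α j) := hmono _ _ hge (bIdx_lt m α hjm)
    _ ≤ Dmax m α b k := by rw [Dmax]; exact Finset.le_sup' (fun j => b (bIdx m α j)) hj

theorem Dmax_eq_b (m : ℕ) (α : Equiv.Perm (Fin m)) (b : ℕ → ℝ)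
    (hsmono : ∀ i j, i < j → j < m → b i < b j)
    (hmono : ∀ i j, i ≤ j → j < m → b i ≤ b j) {k : ℕ} (hk : k < m) :
    ∃ c, k ≤ c ∧ c < m ∧ Dmax m α b k = b c := by
  obtain ⟨j, hj, heq⟩ := Finset.exists_mem_eq_sup' (Finset.nonempty_range_iff.2 (Nat.succ_ne_zero k))
    (fun j => b (bIdx m α j))
  have heq' : Dmax m α b k = b (bIdx m α j) := heq
  have hjm : j < m := lt_of_lt_of_le (Finset.mem_range.1 hj) hk
  refine ⟨bIdx m α j, ?_, bIdx_lt m α hjm, heq'⟩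
  by_contra hlt
  push_neg at hlt
  have h1 : b (bIdx m α j) < b k := hsmono _ _ hlt hk
  have h2 := le_Dmax m α b hmono hk
  rw [heq'] at h2
  linarith

theorem Dmax_id (m : ℕ) (b : ℕ → ℝ) (hmono : ∀ i j, i ≤ j → j < m → b i ≤ b j)
    {k : ℕ} (hk : k < m) : Dmax m 1 b k = b k := by
  apply le_antisymm
  · rw [Dmax]
    apply Finset.sup'_le
    intro j hj
    have hjk : j ≤ k := Nat.lt_succ_iff.1 (Finset.mem_range.1 hj)
    have hjm : j < m := lt_of_le_of_lt hjk hk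
    have : bIdx m 1 j = j := by rw [bIdx, dif_pos hjm]; rfl
    rw [this]
    exact hmono _ _ hjk hk
  · exact le_Dmax m 1 b hmono hk

/-- The cost of an ordering `α` of the sets `S 1, …, S n`: sum over positions `k` of
`f` applied to the Lebesgue measure of the exposed part of the `k`-th set. -/
noncomputable def exposedCost {n : ℕ} (S : Fin n → Set ℝ) (f : ℝ → ℝ)
    (α : Equiv.Perm (Fin n)) : ℝ :=
  ∑ k : Fin n, f ((volume (S (α k) \ ⋃ (j : Fin n) (_ : j < k), S (α j))).toReal)

theorem costFormula (m : ℕ) (hm : 0 < m) (a b : ℕ → ℝ)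
    (hA : ∀ i, i + 1 < m → a i < a (i + 1))
    (hB : ∀ i, i + 1 < m → b i < b (i + 1))
    (hab : ∀ i, i < m → a i < b i)
    (f : ℝ → ℝ) (α : Equiv.Perm (Fin m))
    (hcond : ∀ i : Fin m,
      a (i : ℕ) ∉ (⋃ (j : Fin m) (_ : α.symm j < α.symm i),
        Set.Ico (a (j : ℕ)) (b (j : ℕ))) → i = ⟨0, hm⟩) :
    exposedCost (fun i : Fin m => Set.Ico (a (i : ℕ)) (b (i : ℕ))) f α
      = f (b 0 - a 0) + ∑ i ∈ Ico 1 m, f (Dmax m α b i - Dmax m α b (i-1)) := by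
  have amono : ∀ i j, i ≤ j → j < m → a i ≤ a j := monoStep a m hA
  have bmono : ∀ i j, i ≤ j → j < m → b i ≤ b j := monoStep b m hB
  -- the first interval is I_0
  have step0 : α ⟨0, hm⟩ = ⟨0, hm⟩ := by
    apply hcond
    intro hmem
    simp only [Set.mem_iUnion] at hmem
    obtain ⟨j, hj, _⟩ := hmem
    rw [Equiv.symm_apply_apply] at hj
    exact absurd hj (by simp [Fin.lt_def])
  have hb0 : bIdx m α 0 = 0 := by
    rw [bIdx, dif_pos hm, step0]
  have hbval : ∀ k : Fin m, ((α k : Fin m) : ℕ) = bIdx m α (k : ℕ) := by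
    intro k
    rw [bIdx, dif_pos k.2]
  -- translating the position-indexed union into ℕ form
  have hposUnion : ∀ (k : ℕ) (hk : k < m),
      (⋃ (j : Fin m) (_ : α.symm j < (⟨k, hk⟩ : Fin m)), Set.Ico (a (j : ℕ)) (b (j : ℕ)))
        = ⋃ p ∈ Finset.range k, Set.Ico (a (bIdx m α p)) (b (bIdx m α p)) := by
    intro k hk
    ext x
    simp only [Set.mem_iUnion, Finset.mem_range, exists_prop]
    constructor
    · rintro ⟨j, hj, hx⟩
      refine ⟨(α.symm j : ℕ), hj, ?_⟩
      have hj2 : bIdx m α ((α.symm j : Fin m) : ℕ) = (j : ℕ) := by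
        rw [bIdx, dif_pos (α.symm j).2]
        congr 1
        rw [Fin.eta, Equiv.apply_symm_apply]
      rw [hj2]; exact hx
    · rintro ⟨p, hp, hx⟩
      have hpm : p < m := lt_trans hp hk
      refine ⟨α ⟨p, hpm⟩, ?_, ?_⟩
      · rw [Equiv.symm_apply_apply]; exact hp
      · rw [hbval ⟨p, hpm⟩]; exact hx
  -- the second-kind union in exposedCost
  have hexpUnion : ∀ (k : Fin m),
      (⋃ (j : Fin m) (_ : j < k), Set.Ico (a ((α j : Fin m) : ℕ)) (b ((α j : Fin m) : ℕ)))
        = ⋃ p ∈ Finset.range (k : ℕ), Set.Ico (a (bIdx m α p)) (b (bIdx m α p)) := by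
    intro k
    ext x
    simp only [Set.mem_iUnion, Finset.mem_range, exists_prop]
    constructor
    · rintro ⟨j, hj, hx⟩
      exact ⟨(j : ℕ), hj, by rwa [← hbval j]⟩
    · rintro ⟨p, hp, hx⟩
      have hpm : p < m := lt_trans hp k.2
      refine ⟨⟨p, hpm⟩, hp, ?_⟩
      rwa [hbval ⟨p, hpm⟩]
  -- every interval but the first has covered left endpoint
  have hcov : ∀ k, 0 < k → ∀ (hk : k < m),
      a (bIdx m α k) ∈ ⋃ p ∈ Finset.range k, Set.Ico (a (bIdx m α p)) (b (bIdx m α p)) := by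
    intro k hk0 hk
    by_contra hnot
    have heq : α ⟨k, hk⟩ = ⟨0, hm⟩ := by
      apply hcond
      rw [Equiv.symm_apply_apply, hposUnion k hk]
      rw [show ((α ⟨k, hk⟩ : Fin m) : ℕ) = bIdx m α k from hbval ⟨k, hk⟩]
      exact hnot
    have := α.injective (heq.trans step0.symm)
    have : k = 0 := by simpa using congrArg Fin.val this
    omega
  -- the union of the first k+1 intervals
  have hU : ∀ k, k < m →
      (⋃ p ∈ Finset.range (k+1), Set.Ico (a (bIdx m α p)) (b (bIdx m α p)))
        = Set.Ico (a 0) (Dmax m α b k) := by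
    intro k
    induction k with
    | zero =>
      intro _
      rw [Dmax_zero, hb0]
      simp [hb0]
    | succ k ih =>
      intro hk1
      have hk : k < m := by omega
      have ihU := ih hk
      rw [Finset.range_add_one, Finset.set_biUnion_insert, ihU]
      have hkm : bIdx m α (k+1) < m := bIdx_lt m α hk1
      have hmem := hcov (k+1) (by omega) hk1
      rw [ihU, Set.mem_Ico] at hmem
      obtain ⟨h1, h2⟩ := hmem
      have hab' := hab _ hkm
      rw [Set.Ico_union_Ico' (le_of_lt (lt_of_le_of_lt h1 hab')) (le_of_lt h2),
        inf_eq_right.2 h1, ← Dmax_succ]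
  -- measure of each exposed piece
  have hterm : ∀ k : Fin m,
      (volume (Set.Ico (a ((α k : Fin m) : ℕ)) (b ((α k : Fin m) : ℕ)) \
        ⋃ (j : Fin m) (_ : j < k), Set.Ico (a ((α j : Fin m) : ℕ)) (b ((α j : Fin m) : ℕ)))).toReal
      = if (k : ℕ) = 0 then b 0 - a 0
        else Dmax m α b (k : ℕ) - Dmax m α b ((k : ℕ) - 1) := by
    intro k
    rw [hexpUnion k]
    rcases Nat.eq_zero_or_pos (k : ℕ) with hk0 | hk0
    · rw [if_pos hk0, hbval k, hk0, hb0, Finset.range_zero]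
      simp only [Finset.notMem_empty, Set.iUnion_of_empty, Set.iUnion_empty,
        Set.iUnion_false, Set.diff_empty]
      rw [Real.volume_Ico, ENNReal.toReal_ofReal']
      exact max_eq_left (by linarith [hab 0 hm])
    · obtain ⟨k', hkk⟩ : ∃ k', (k : ℕ) = k' + 1 := ⟨(k : ℕ) - 1, by omega⟩
      rw [if_neg (by omega), hbval k, hkk]
      simp only [Nat.add_sub_cancel, show (1:ℕ) + k' - 1 = k' by omega]
      have hk1m : k' + 1 < m := hkk ▸ k.2
      have hkm : bIdx m α (k'+1) < m := bIdx_lt m α hk1m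
      have hmem := hcov (k'+1) (by omega) hk1m
      rw [hU k' (by omega), Set.mem_Ico] at hmem
      obtain ⟨h1, h2⟩ := hmem
      rw [hU k' (by omega)]
      have hdiff : Set.Ico (a (bIdx m α (k'+1))) (b (bIdx m α (k'+1))) \ Set.Ico (a 0) (Dmax m α b k')
          = Set.Ico (Dmax m α b k') (b (bIdx m α (k'+1))) := by
        ext x
        simp only [Set.mem_diff, Set.mem_Ico, not_and, not_lt]
        constructor
        · rintro ⟨⟨hx1, hx2⟩, hx3⟩
          exact ⟨hx3 (le_trans h1 hx1), hx2⟩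
        · rintro ⟨hx1, hx2⟩
          exact ⟨⟨le_trans (le_of_lt h2) hx1, hx2⟩, fun _ => hx1⟩
      rw [hdiff, Real.volume_Ico, ENNReal.toReal_ofReal', Dmax_succ]
      rcases le_total (b (bIdx m α (k'+1))) (Dmax m α b k') with h | h
      · rw [sup_eq_right.2 (by linarith : b (bIdx m α (k'+1)) - Dmax m α b k' ≤ (0:ℝ)),
          sup_eq_right.2 h]
        rw [sub_self]
      · rw [sup_eq_left.2 (by linarith : (0:ℝ) ≤ b (bIdx m α (k'+1)) - Dmax m α b k'),
          sup_eq_left.2 h]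
  -- assemble the sum
  have hcost : exposedCost (fun i : Fin m => Set.Ico (a (i : ℕ)) (b (i : ℕ))) f α
      = ∑ k : Fin m, (fun p : ℕ =>
          f (if p = 0 then b 0 - a 0 else Dmax m α b p - Dmax m α b (p-1))) (k : ℕ) := by
    rw [exposedCost]
    exact Finset.sum_congr rfl fun k _ => by rw [hterm k]
  rw [hcost, Fin.sum_univ_eq_sum_range (fun p : ℕ =>
      f (if p = 0 then b 0 - a 0 else Dmax m α b p - Dmax m α b (p-1))) m,
    Finset.range_eq_Ico, Finset.sum_eq_sum_Ico_succ_bot hm]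
  rw [if_pos rfl]
  congr 1
  exact Finset.sum_congr rfl fun i hi =>
    by rw [if_neg (by have := (Finset.mem_Ico.1 hi).1; omega)]

/-- For agreeable, pairwise-overlapping intervals `I_0, …, I_{m-1}` and a continuous
convex cost `f`, the identity ordering is the unique-type minimizer among all orderings
in which the first interval is the only E-interval (an interval `I_i` is an E-interval
of `α` when its left endpoint `a i` lies in its exposed part), and the identity ordering
has cost `f (b 0 - a 0) + ∑_{i=1}^{m-1} f (b i - b (i-1))`. -/
theorem stmt_4 (m : ℕ) (hm : 0 < m) (a b : ℕ → ℝ)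
    (hA : ∀ i, i + 1 < m → a i < a (i + 1))
    (hB : ∀ i, i + 1 < m → b i < b (i + 1))
    (hab : ∀ i, i < m → a i < b i)
    (hov : ∀ i, i + 1 < m → a (i + 1) < b i)
    (f : ℝ → ℝ) (hconv : ConvexOn ℝ Set.univ f) (hcont : Continuous f) :
    -- the identity ordering has `I_0` as its only E-interval
    (∀ i : Fin m,
      a (i : ℕ) ∉ (⋃ (j : Fin m) (_ : j < i), Set.Ico (a (j : ℕ)) (b (j : ℕ))) →
      i = ⟨0, hm⟩) ∧
    -- the cost of the identity ordering
    exposedCost (fun i : Fin m => Set.Ico (a (i : ℕ)) (b (i : ℕ))) f 1 =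
      f (b 0 - a 0) + ∑ i ∈ Finset.Ico 1 m, f (b i - b (i - 1)) ∧
    -- the identity ordering minimizes the cost among all orderings whose
    -- only E-interval is the first interval
    ∀ α : Equiv.Perm (Fin m),
      (∀ i : Fin m,
        a (i : ℕ) ∉ (⋃ (j : Fin m) (_ : α.symm j < α.symm i),
          Set.Ico (a (j : ℕ)) (b (j : ℕ))) → i = ⟨0, hm⟩) →
      exposedCost (fun i : Fin m => Set.Ico (a (i : ℕ)) (b (i : ℕ))) f 1 ≤
      exposedCost (fun i : Fin m => Set.Ico (a (i : ℕ)) (b (i : ℕ))) f α := by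
  have amono : ∀ i j, i ≤ j → j < m → a i ≤ a j := monoStep a m hA
  have bmono : ∀ i j, i ≤ j → j < m → b i ≤ b j := monoStep b m hB
  have bsmono : ∀ i j, i < j → j < m → b i < b j := strictMonoStep b m hB
  have part1 : ∀ i : Fin m,
      a (i : ℕ) ∉ (⋃ (j : Fin m) (_ : j < i), Set.Ico (a (j : ℕ)) (b (j : ℕ))) →
      i = ⟨0, hm⟩ := by
    intro i hi
    by_contra hne
    have hi0 : 0 < (i : ℕ) := by
      rcases Nat.eq_zero_or_pos (i : ℕ) with h | h
      · exact absurd (Fin.ext h) hne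
      · exact h
    apply hi
    have him : (i : ℕ) < m := i.2
    have hmem : a (i : ℕ) ∈ Set.Ico (a ((i : ℕ) - 1)) (b ((i : ℕ) - 1)) := by
      constructor
      · exact amono _ _ (by omega) him
      · have := hov ((i : ℕ) - 1) (by omega)
        rwa [show (i : ℕ) - 1 + 1 = (i : ℕ) by omega] at this
    exact Set.mem_iUnion.2 ⟨⟨(i : ℕ) - 1, by omega⟩,
      Set.mem_iUnion.2 ⟨by simp [Fin.lt_def]; omega, hmem⟩⟩
  have hcond1 : ∀ i : Fin m,
      a (i : ℕ) ∉ (⋃ (j : Fin m) (_ : (1 : Equiv.Perm (Fin m)).symm j <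
        (1 : Equiv.Perm (Fin m)).symm i), Set.Ico (a (j : ℕ)) (b (j : ℕ))) → i = ⟨0, hm⟩ := by
    intro i hi
    apply part1 i
    simpa [Equiv.Perm.one_symm] using hi
  have hid := costFormula m hm a b hA hB hab f 1 hcond1
  have hidsum : ∑ i ∈ Ico 1 m, f (Dmax m 1 b i - Dmax m 1 b (i-1))
      = ∑ i ∈ Ico 1 m, f (b i - b (i - 1)) := by
    refine Finset.sum_congr rfl fun i hi => ?_
    obtain ⟨h1, h2⟩ := Finset.mem_Ico.1 hi
    rw [Dmax_id m b bmono h2, Dmax_id m b bmono (by omega)]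
  refine ⟨part1, by rw [hid, hidsum], ?_⟩
  intro α hcond
  have hα := costFormula m hm a b hA hB hab f α hcond
  rw [hid, hidsum, hα]
  have step0 : α ⟨0, hm⟩ = ⟨0, hm⟩ := by
    apply hcond
    intro hmem
    simp only [Set.mem_iUnion] at hmem
    obtain ⟨j, hj, _⟩ := hmem
    rw [Equiv.symm_apply_apply] at hj
    exact absurd hj (by simp [Fin.lt_def])
  have hD0 : Dmax m α b 0 = b 0 := by
    rw [Dmax_zero, bIdx, dif_pos hm, step0]
  have hDlast : Dmax m α b (m-1) = b (m-1) := by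
    obtain ⟨c, hc1, hc2, hc3⟩ := Dmax_eq_b m α b bsmono bmono (show m - 1 < m by omega)
    rw [hc3, show c = m - 1 by omega]
  have key := mainInd f hconv b m hB (Dmax m α b) hD0
    (fun k hk => Dmax_eq_b m α b bsmono bmono hk)
    (fun k _ => Dmax_mono m α b k)
    (m-1) (by omega) (m-1) le_rfl (by omega) hDlast
  rw [show m - 1 + 1 = m by omega, Nat.sub_self] at key
  simp only [Nat.cast_zero, zero_mul, add_zero] at key
  linarith
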